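/- Let ℓ, p, q be positive integers with p(q−1) ≤ ℓ, and let x₁, ..., x_q be nonnegative integers with x₁ + ⋯ + x_q ≤ ℓ + p and x_i ≤ ℓ for all i. Then Σ_{i∈[q]} 2^{x_i} ≤ 2^ℓ + 2^p + q − 2. -/
import Mathlib

lemma pair_pow (a b : ℕ) : 2 ^ a + 2 ^ b ≤ 2 ^ (a + b) + 1 := by
  have ha : 1 ≤ 2 ^ a := Nat.one_le_two_pow
  have hb : 1 ≤ 2 ^ b := Nat.one_le_two_pow
  have : 2 ^ (a + b) = 2 ^ a * 2 ^ b := pow_add 2 a b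
  nlinarith

lemma sum_pow_le {ι : Type*} [DecidableEq ι] (t : Finset ι) (x : ι → ℕ) :
    ∑ i ∈ t, 2 ^ (x i) + 1 ≤ 2 ^ (∑ i ∈ t, x i) + t.card := by
  classical
  refine Finset.induction_on t (by simp) ?_
  intro a t ha ih
  rw [Finset.sum_insert ha, Finset.sum_insert ha, Finset.card_insert_of_notMem ha]
  have h2 := pair_pow (x a) (∑ i ∈ t, x i)
  have h3 : 2 ^ (x a) + 2 ^ (∑ i ∈ t, x i) ≤ 2 ^ (x a + ∑ i ∈ t, x i) + 1 := h2
  omega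

lemma swap_pow (a b c d : ℕ) (hca : c ≤ a) (hcb : c ≤ b) (habcd : a + b = c + d) :
    2 ^ a + 2 ^ b ≤ 2 ^ c + 2 ^ d := by
  rcases le_total a b with hab | hab
  · obtain ⟨t, rfl⟩ := Nat.exists_eq_add_of_le hca
    have hd : d = b + t := by omega
    subst hd
    rw [pow_add, pow_add]
    have hc : 2 ^ c ≤ 2 ^ b := Nat.pow_le_pow_right (by norm_num) (by omega)
    have ht : 1 ≤ 2 ^ t := Nat.one_le_two_pow
    nlinarith
  · obtain ⟨t, rfl⟩ := Nat.exists_eq_add_of_le hcb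
    have hd : d = a + t := by omega
    subst hd
    rw [pow_add, pow_add]
    have hc : 2 ^ c ≤ 2 ^ a := Nat.pow_le_pow_right (by norm_num) (by omega)
    have ht : 1 ≤ 2 ^ t := Nat.one_le_two_pow
    nlinarith

theorem stmt_6 (ℓ p q : ℕ) (hℓ : 1 ≤ ℓ) (hp : 1 ≤ p) (hq : 1 ≤ q)
    (h : p * (q - 1) ≤ ℓ) (x : Fin q → ℕ)
    (hsum : ∑ i, x i ≤ ℓ + p) (hle : ∀ i, x i ≤ ℓ) :
    ∑ i, 2 ^ (x i) ≤ 2 ^ ℓ + 2 ^ p + q - 2 := by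
  set s := ∑ i, x i with hs
  have hp2 : 2 ≤ 2 ^ p := by
    calc 2 = 2 ^ 1 := rfl
    _ ≤ 2 ^ p := Nat.pow_le_pow_right (by norm_num) hp
  have hℓ2 : 2 ≤ 2 ^ ℓ := by
    calc 2 = 2 ^ 1 := rfl
    _ ≤ 2 ^ ℓ := Nat.pow_le_pow_right (by norm_num) hℓ
  by_cases hsl : s ≤ ℓ
  · have hA := sum_pow_le (Finset.univ : Finset (Fin q)) x
    have hcard : (Finset.univ : Finset (Fin q)).card = q := by simp
    have hpow : 2 ^ s ≤ 2 ^ ℓ := Nat.pow_le_pow_right (by norm_num) hsl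
    simp only [Finset.card_univ, Fintype.card_fin] at hA
    rw [← hs] at hA
    omega
  · push_neg at hsl
    -- pick a maximal coordinate
    obtain ⟨i₀, -, hmax⟩ := Finset.exists_max_image (Finset.univ : Finset (Fin q)) x
      ⟨⟨0, hq⟩, Finset.mem_univ _⟩
    set m := x i₀ with hm
    set r := ∑ i ∈ Finset.univ.erase i₀, x i with hr
    have hsplit : m + r = s := by
      rw [hm, hr, hs, Finset.add_sum_erase _ x (Finset.mem_univ i₀)]
    have hmℓ : m ≤ ℓ := hle i₀
    have hcard : (Finset.univ.erase i₀).card = q - 1 := by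
      rw [Finset.card_erase_of_mem (Finset.mem_univ i₀)]; simp
    have hrℓ : r ≤ ℓ := by
      rcases le_total p m with hpm | hpm
      · omega
      · have h1 : r ≤ (q - 1) * m := by
          calc r ≤ (Finset.univ.erase i₀).card * m := by
                  rw [hr]
                  apply Finset.sum_le_card_nsmul
                  intro i _
                  exact hmax i (Finset.mem_univ i)
          _ = (q - 1) * m := by rw [hcard]
        calc r ≤ (q - 1) * m := h1
        _ ≤ (q - 1) * p := Nat.mul_le_mul_left _ hpm
        _ = p * (q - 1) := Nat.mul_comm _ _
        _ ≤ ℓ := h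
    have hkey : 2 ^ m + 2 ^ r ≤ 2 ^ (s - ℓ) + 2 ^ ℓ :=
      swap_pow m r (s - ℓ) ℓ (by omega) (by omega) (by omega)
    have hsℓp : 2 ^ (s - ℓ) ≤ 2 ^ p := Nat.pow_le_pow_right (by norm_num) (by omega)
    have hA := sum_pow_le (Finset.univ.erase i₀) x
    rw [hcard, ← hr] at hA
    have hsum2 : ∑ i, 2 ^ (x i) = 2 ^ m + ∑ i ∈ Finset.univ.erase i₀, 2 ^ (x i) := by
      rw [hm, Finset.add_sum_erase _ (fun i => 2 ^ (x i)) (Finset.mem_univ i₀)]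
    omega
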